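/- Let E be an m×n real matrix of rank r with SVD-partition U = [U₁ U₂], V = [V₁ V₂], S, and let B be an m×p real matrix. Then the matrix [E B] (horizontal concatenation of E and B) has full row rank if and only if U₂ᵀ·B has full row rank. -/

import Mathlib

open Matrix

noncomputable section

/-- A real matrix has full column rank (FCR) iff its rank equals its number of columns. -/
def FCR {m n : Type*} [Fintype m] [Fintype n] (A : Matrix m n ℝ) : Prop :=
  A.rank = Fintype.card n

/-- A real matrix has full row rank (FRR) iff its rank equals its number of rows. -/
def FRR {m n : Type*} [Fintype m] [Fintype n] (A : Matrix m n ℝ) : Prop :=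
  A.rank = Fintype.card m

/-- `E` is an `m × n` real matrix of rank `r` with SVD-partition
`U = [U₁ U₂]`, `V = [V₁ V₂]`, `S`: the matrices `U = [U₁ U₂]` and `V = [V₁ V₂]` are
orthogonal, `S` is an `r × r` diagonal matrix with positive diagonal entries,
and `E = U₁ * S * V₁ᵀ`. -/
def IsSVDPartition {m n r : ℕ} (E : Matrix (Fin m) (Fin n) ℝ)
    (U₁ : Matrix (Fin m) (Fin r) ℝ) (U₂ : Matrix (Fin m) (Fin (m - r)) ℝ)
    (V₁ : Matrix (Fin n) (Fin r) ℝ) (V₂ : Matrix (Fin n) (Fin (n - r)) ℝ)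
    (S : Matrix (Fin r) (Fin r) ℝ) : Prop :=
  r ≤ m ∧ r ≤ n ∧
    (Matrix.fromCols U₁ U₂)ᵀ * Matrix.fromCols U₁ U₂ = 1 ∧
    (Matrix.fromCols V₁ V₂)ᵀ * Matrix.fromCols V₁ V₂ = 1 ∧
    (∃ d : Fin r → ℝ, (∀ i, 0 < d i) ∧ S = Matrix.diagonal d) ∧
    E = U₁ * S * V₁ᵀ ∧ E.rank = r

lemma frr_iff_vecMul {m n : Type*} [Fintype m] [Fintype n] (A : Matrix m n ℝ) :
    FRR A ↔ ∀ x : m → ℝ, x ᵥ* A = 0 → x = 0 := by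
  unfold FRR
  rw [← Matrix.rank_transpose]
  have hrn := LinearMap.finrank_range_add_finrank_ker (Aᵀ.mulVecLin)
  rw [Module.finrank_fintype_fun_eq_card] at hrn
  unfold Matrix.rank
  constructor
  · intro h x hx
    have hker : Module.finrank ℝ (LinearMap.ker Aᵀ.mulVecLin) = 0 := by omega
    rw [Submodule.finrank_eq_zero] at hker
    rw [Matrix.ker_mulVecLin_eq_bot_iff] at hker
    exact hker x (by rw [Matrix.mulVec_transpose]; exact hx)
  · intro h
    have hker : LinearMap.ker Aᵀ.mulVecLin = ⊥ := by
      rw [Matrix.ker_mulVecLin_eq_bot_iff]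
      intro v hv
      exact h v (by rwa [← Matrix.mulVec_transpose])
    rw [hker, finrank_bot] at hrn
    omega


/-- `[E  B]` has full row rank iff `U₂ᵀ·B` has full row rank. -/
theorem concat_frr_iff_transpose_mul_frr (m n r p : ℕ)
    (E : Matrix (Fin m) (Fin n) ℝ)
    (U₁ : Matrix (Fin m) (Fin r) ℝ) (U₂ : Matrix (Fin m) (Fin (m - r)) ℝ)
    (V₁ : Matrix (Fin n) (Fin r) ℝ) (V₂ : Matrix (Fin n) (Fin (n - r)) ℝ)
    (S : Matrix (Fin r) (Fin r) ℝ)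
    (hsvd : IsSVDPartition E U₁ U₂ V₁ V₂ S)
    (B : Matrix (Fin m) (Fin p) ℝ) :
    FRR (Matrix.fromCols E B) ↔ FRR (U₂ᵀ * B) := by
  obtain ⟨hrm, hrn, hU, hV, ⟨d, hd, hS⟩, hE, -⟩ := hsvd
  -- block structure of UᵀU = 1
  have hUb : Matrix.fromBlocks (U₁ᵀ * U₁) (U₁ᵀ * U₂) (U₂ᵀ * U₁) (U₂ᵀ * U₂)
      = Matrix.fromBlocks 1 0 0 1 := by
    rw [← Matrix.fromRows_mul_fromCols, ← Matrix.transpose_fromCols, hU,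
      Matrix.fromBlocks_one]
  have hU11 : U₁ᵀ * U₁ = 1 := congrArg Matrix.toBlocks₁₁ hUb
  have hU12 : U₁ᵀ * U₂ = 0 := congrArg Matrix.toBlocks₁₂ hUb
  have hU21 : U₂ᵀ * U₁ = 0 := congrArg Matrix.toBlocks₂₁ hUb
  have hU22 : U₂ᵀ * U₂ = 1 := congrArg Matrix.toBlocks₂₂ hUb
  have hVb : Matrix.fromBlocks (V₁ᵀ * V₁) (V₁ᵀ * V₂) (V₂ᵀ * V₁) (V₂ᵀ * V₂)
      = Matrix.fromBlocks 1 0 0 1 := by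
    rw [← Matrix.fromRows_mul_fromCols, ← Matrix.transpose_fromCols, hV,
      Matrix.fromBlocks_one]
  have hV11 : V₁ᵀ * V₁ = 1 := congrArg Matrix.toBlocks₁₁ hVb
  -- U * Uᵀ = 1, i.e. U₁U₁ᵀ + U₂U₂ᵀ = 1
  have e : Fin m ≃ Fin r ⊕ Fin (m - r) :=
    (finCongr (by omega : m = r + (m - r))).trans finSumFinEquiv.symm
  have hUU : U₁ * U₁ᵀ + U₂ * U₂ᵀ = 1 := by
    have h1 : Matrix.fromCols U₁ U₂ * Matrix.fromRows U₁ᵀ U₂ᵀ = 1 := by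
      rw [Matrix.fromCols_mul_fromRows_eq_one_comm e]
      rw [← Matrix.transpose_fromCols]
      exact hU
    rwa [Matrix.fromCols_mul_fromRows] at h1
  rw [frr_iff_vecMul, frr_iff_vecMul]
  constructor
  · intro h y hy
    set x : Fin m → ℝ := y ᵥ* U₂ᵀ with hx
    have hxE : x ᵥ* E = 0 := by
      rw [hE, hx, ← Matrix.vecMul_vecMul, ← Matrix.vecMul_vecMul,
        Matrix.vecMul_vecMul y U₂ᵀ U₁, hU21]
      simp
    have hxB : x ᵥ* B = 0 := by
      rw [hx, Matrix.vecMul_vecMul]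
      exact hy
    have hx0 : x = 0 := by
      apply h
      rw [Matrix.vecMul_fromCols, hxE, hxB]
      simp [Sum.elim_const_const]
    have : y = x ᵥ* U₂ := by
      rw [hx, Matrix.vecMul_vecMul, hU22, Matrix.vecMul_one]
    rw [this, hx0, Matrix.zero_vecMul]
  · intro h x hx
    rw [Matrix.vecMul_fromCols] at hx
    have hxE : x ᵥ* E = 0 := by
      funext i; exact congrFun hx (Sum.inl i)
    have hxB : x ᵥ* B = 0 := by
      funext i; exact congrFun hx (Sum.inr i)
    -- from x ᵥ* E = 0 deduce x ᵥ* U₁ = 0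
    have hxU₁ : x ᵥ* U₁ = 0 := by
      have h1 : ((x ᵥ* U₁) ᵥ* S) ᵥ* (V₁ᵀ * V₁) = 0 := by
        rw [Matrix.vecMul_vecMul, ← Matrix.vecMul_vecMul, ← Matrix.vecMul_vecMul]
        rw [hE] at hxE
        rw [← Matrix.vecMul_vecMul, ← Matrix.vecMul_vecMul] at hxE
        rw [hxE, Matrix.zero_vecMul]
      rw [hV11, Matrix.vecMul_one] at h1
      funext i
      have := congrFun h1 i
      rw [hS, Matrix.vecMul_diagonal] at this
      have hdi := (hd i).ne'
      simpa [mul_eq_zero, hdi] using this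
    have hxdec : x = (x ᵥ* U₂) ᵥ* U₂ᵀ := by
      have : x ᵥ* (U₁ * U₁ᵀ + U₂ * U₂ᵀ) = x := by rw [hUU, Matrix.vecMul_one]
      rw [Matrix.vecMul_add, ← Matrix.vecMul_vecMul, ← Matrix.vecMul_vecMul, hxU₁,
        Matrix.zero_vecMul, zero_add] at this
      exact this.symm
    have hy : x ᵥ* U₂ = 0 := by
      apply h
      rw [← Matrix.vecMul_vecMul, ← hxdec]
      exact hxB
    rw [hxdec, hy, Matrix.zero_vecMul]
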